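/- Let Z be a real normed linear space and let K₁, K₂ ⊆ Z be nonempty cones (i.e., t·z ∈ Kᵢ whenever z ∈ Kᵢ and t > 0), and let ε ∈ (0,1). If vectors z₁, z₂ ∈ Z satisfy ‖z₁‖ + ‖z₂‖ = 1, z₁ + z₂ = 0 and d(z₁, K₁) + d(z₂, K₂) < ε, then there exist vectors ẑ₁ ∈ K₁ and ẑ₂ ∈ K₂ such that ‖ẑ₁‖ + ‖ẑ₂‖ = 1 and ‖ẑ₁ + ẑ₂‖ < ε/(1−ε). -/

import Mathlib

/-- Lemma 1(ii): conversion from exactly opposite pairs near the cones to pairs in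
the cones with small sum. -/
theorem stmt_1 {Z : Type*} [NormedAddCommGroup Z] [NormedSpace ℝ Z]
    (K₁ K₂ : Set Z) (hK₁ : K₁.Nonempty) (hK₂ : K₂.Nonempty)
    (hcone₁ : ∀ z ∈ K₁, ∀ t : ℝ, 0 < t → t • z ∈ K₁)
    (hcone₂ : ∀ z ∈ K₂, ∀ t : ℝ, 0 < t → t • z ∈ K₂)
    (ε : ℝ) (hε0 : 0 < ε) (hε1 : ε < 1)
    (z₁ z₂ : Z) (hnorm : ‖z₁‖ + ‖z₂‖ = 1) (hsum : z₁ + z₂ = 0)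
    (hdist : Metric.infDist z₁ K₁ + Metric.infDist z₂ K₂ < ε) :
    ∃ w₁ ∈ K₁, ∃ w₂ ∈ K₂, ‖w₁‖ + ‖w₂‖ = 1 ∧ ‖w₁ + w₂‖ < ε / (1 - ε) := by
  set d₁ := Metric.infDist z₁ K₁ with hd₁def
  set d₂ := Metric.infDist z₂ K₂ with hd₂def
  have hd₁0 : 0 ≤ d₁ := Metric.infDist_nonneg
  have hd₂0 : 0 ≤ d₂ := Metric.infDist_nonneg
  set δ := (ε - (d₁ + d₂)) / 2 with hδdef
  have hδ0 : 0 < δ := by simp only [hδdef]; linarith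
  obtain ⟨k₁, hk₁, hdk₁⟩ := (Metric.infDist_lt_iff hK₁).mp
    (show d₁ < d₁ + δ by linarith)
  obtain ⟨k₂, hk₂, hdk₂⟩ := (Metric.infDist_lt_iff hK₂).mp
    (show d₂ < d₂ + δ by linarith)
  rw [dist_eq_norm] at hdk₁ hdk₂
  have hkk : ‖k₁ + k₂‖ < ε := by
    have h1 : k₁ + k₂ = (k₁ - z₁) + (k₂ - z₂) := by
      have : z₂ = -z₁ := eq_neg_of_add_eq_zero_right hsum
      rw [this]; abel
    rw [h1]
    calc ‖(k₁ - z₁) + (k₂ - z₂)‖ ≤ ‖k₁ - z₁‖ + ‖k₂ - z₂‖ := norm_add_le _ _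
      _ = ‖z₁ - k₁‖ + ‖z₂ - k₂‖ := by rw [norm_sub_rev k₁, norm_sub_rev k₂]
      _ < (d₁ + δ) + (d₂ + δ) := by linarith
      _ = ε := by simp only [hδdef]; ring
  set s := ‖k₁‖ + ‖k₂‖ with hsdef
  have hs1 : 1 - ε ≤ s := by
    have h1 : ‖z₁‖ - ‖k₁‖ ≤ ‖z₁ - k₁‖ := norm_sub_norm_le _ _
    have h2 : ‖z₂‖ - ‖k₂‖ ≤ ‖z₂ - k₂‖ := norm_sub_norm_le _ _
    simp only [hsdef, hδdef] at *
    linarith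
  have hs0 : 0 < s := by linarith
  refine ⟨s⁻¹ • k₁, hcone₁ k₁ hk₁ s⁻¹ (inv_pos.mpr hs0),
    s⁻¹ • k₂, hcone₂ k₂ hk₂ s⁻¹ (inv_pos.mpr hs0), ?_, ?_⟩
  · rw [norm_smul, norm_smul, Real.norm_eq_abs, abs_of_pos (inv_pos.mpr hs0)]
    field_simp
    exact hsdef.symm
  · rw [← smul_add, norm_smul, Real.norm_eq_abs, abs_of_pos (inv_pos.mpr hs0)]
    calc s⁻¹ * ‖k₁ + k₂‖ < s⁻¹ * ε := by
          exact mul_lt_mul_of_pos_left hkk (inv_pos.mpr hs0)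
      _ ≤ ε / (1 - ε) := by
          rw [div_eq_mul_inv, mul_comm ε]
          exact mul_le_mul_of_nonneg_right
            (inv_anti₀ (by linarith) hs1) hε0.le
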